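/- arXiv:1806.08142 — 2 statements merged into one kernel-verified Lean document; each statement's English description precedes it below -/
import Mathlib

section
/- Let π₁ and π₂ be compatible Poisson tensors on ℝ^N, both not depending on the variable x_p for some fixed 1 ≤ p ≤ N, let λ ∈ ℝ, and let c be a Casimir function for π₂. Let c' be a Casimir function for π₂ and f a smooth function such that ∑_{m=1}^N π_{2,mj}(x) (∂f/∂x_m)(x) = ∑_{n=1}^N π_{1,jn}(x) (∂c'/∂x_n)(x) for all j and all x (i.e. {f, x_j}_{π₂} = {x_j, c'}_{π₁}), and assume ∂c'/∂x_p ≡ 0 and ∂f/∂x_p ≡ 0. Then the functions F₁(x,y) = c'(x) and F₂(x,y) = ∑_{s=1}^N (∂c'/∂x_s)(x) y_s + λ f(x) are Casimir functions for the Poisson tensor Π_{TM,λ,c(x)} on ℝ^{2N} with blocks Π^{xx}=0, Π^{xy}=π₂(x)+c(x)E_pp, Π^{yx}=π₂(x)−c(x)E_pp, Π^{yy}=∑_s (∂π₂/∂x_s)(x) y_s + λπ₁(x); if moreover c is a linear Casimir function for π₂, they are also Casimir functions for the tensor Π_{TM,λ,c(y)} with c(y) in place of c(x). -/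
open scoped ContDiff

/-- Partial derivative `∂f/∂z_s` at `z`, for functions on `ℝ^ι`. -/
noncomputable def pd {ι : Type} [Fintype ι] [DecidableEq ι]
    (s : ι) (f : (ι → ℝ) → ℝ) (x : ι → ℝ) : ℝ :=
  fderiv ℝ f x (Pi.single s 1)

/-- A Poisson tensor on `ℝ^ι`: a smooth antisymmetric matrix field satisfying the
Jacobi condition. -/
def IsPoissonTensor {ι : Type} [Fintype ι] [DecidableEq ι]
    (π : (ι → ℝ) → Matrix ι ι ℝ) : Prop :=
  (∀ i j, ContDiff ℝ ∞ fun x => π x i j) ∧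
  (∀ x i j, π x j i = - π x i j) ∧
  (∀ x i j k, ∑ s, (pd s (fun y => π y i j) x * π x s k
      + pd s (fun y => π y k i) x * π x s j
      + pd s (fun y => π y j k) x * π x s i) = 0)

/-- `c` is a (smooth) Casimir function for `π`. -/
def IsCasimir {ι : Type} [Fintype ι] [DecidableEq ι]
    (π : (ι → ℝ) → Matrix ι ι ℝ) (c : (ι → ℝ) → ℝ) : Prop :=
  ContDiff ℝ ∞ c ∧ ∀ x j, ∑ s, pd s c x * π x s j = 0

/-- The matrix of partial derivatives `(∂π_{ij}/∂x_s)(x)`. -/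
noncomputable def pdMat {N : ℕ} (s : Fin N)
    (π : (Fin N → ℝ) → Matrix (Fin N) (Fin N) ℝ) (x : Fin N → ℝ) :
    Matrix (Fin N) (Fin N) ℝ :=
  Matrix.of fun i j => pd s (fun y => π y i j) x

/-- The `x`-part of a point `z = (x,y) ∈ ℝ^{2N}`. -/
def Xc {N : ℕ} (z : (Fin N ⊕ Fin N) → ℝ) : Fin N → ℝ := fun i => z (Sum.inl i)

/-- The `y`-part of a point `z = (x,y) ∈ ℝ^{2N}`. -/
def Yc {N : ℕ} (z : (Fin N ⊕ Fin N) → ℝ) : Fin N → ℝ := fun i => z (Sum.inr i)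

/-- A linear function `c(x) = ∑ s, a_s x_s`. -/
def IsLinearFun {N : ℕ} (c : (Fin N → ℝ) → ℝ) : Prop :=
  ∃ a : Fin N → ℝ, ∀ x, c x = ∑ s, a s * x s

/-- The tensor `Π_{TM,λ,c(x)}` on `ℝ^{2N}`. -/
noncomputable def tensorLamCX {N : ℕ} (π₁ π₂ : (Fin N → ℝ) → Matrix (Fin N) (Fin N) ℝ)
    (p : Fin N) (c : (Fin N → ℝ) → ℝ) (lam : ℝ) (z : (Fin N ⊕ Fin N) → ℝ) :
    Matrix (Fin N ⊕ Fin N) (Fin N ⊕ Fin N) ℝ :=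
  Matrix.fromBlocks
    0
    (π₂ (Xc z) + c (Xc z) • Matrix.single p p (1 : ℝ))
    (π₂ (Xc z) - c (Xc z) • Matrix.single p p (1 : ℝ))
    (∑ s, Yc z s • pdMat s π₂ (Xc z) + lam • π₁ (Xc z))

/-- The tensor `Π_{TM,λ,c(y)}` on `ℝ^{2N}`. -/
noncomputable def tensorLamCY {N : ℕ} (π₁ π₂ : (Fin N → ℝ) → Matrix (Fin N) (Fin N) ℝ)
    (p : Fin N) (c : (Fin N → ℝ) → ℝ) (lam : ℝ) (z : (Fin N ⊕ Fin N) → ℝ) :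
    Matrix (Fin N ⊕ Fin N) (Fin N ⊕ Fin N) ℝ :=
  Matrix.fromBlocks
    0
    (π₂ (Xc z) + c (Yc z) • Matrix.single p p (1 : ℝ))
    (π₂ (Xc z) - c (Yc z) • Matrix.single p p (1 : ℝ))
    (∑ s, Yc z s • pdMat s π₂ (Xc z) + lam • π₁ (Xc z))

lemma le1 : (∞ : WithTop ℕ∞) ≠ 0 := by simp

lemma contDiff_pd {ι : Type} [Fintype ι] [DecidableEq ι]
    (s : ι) (f : (ι → ℝ) → ℝ) (hf : ContDiff ℝ ∞ f) : ContDiff ℝ ∞ (pd s f) :=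
  (hf.fderiv_right (by simp)).clm_apply contDiff_const

lemma pd_comm {ι : Type} [Fintype ι] [DecidableEq ι]
    (i s : ι) (f : (ι → ℝ) → ℝ) (hf : ContDiff ℝ ∞ f) (x : ι → ℝ) :
    pd i (pd s f) x = pd s (pd i f) x := by
  have hsym : IsSymmSndFDerivAt ℝ f x :=
    hf.contDiffAt.isSymmSndFDerivAt (by simp [minSmoothness_of_isRCLikeNormedField]; exact WithTop.coe_le_coe.2 le_top)
  have hd : DifferentiableAt ℝ (fderiv ℝ f) x :=
    ((hf.fderiv_right (by simp)).differentiable le1).differentiableAt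
  have key : ∀ v : ι → ℝ, fderiv ℝ (fun y => fderiv ℝ f y v) x =
      (fderiv ℝ (fderiv ℝ f) x).flip v := by
    intro v
    rw [fderiv_clm_apply hd (differentiableAt_const v)]
    simp
  unfold pd
  rw [key, key]
  exact hsym _ _

lemma pd_zero_fun {ι : Type} [Fintype ι] [DecidableEq ι]
    (s : ι) (g : (ι → ℝ) → ℝ) (h : ∀ x, g x = 0) (x : ι → ℝ) : pd s g x = 0 := by
  have : g = fun _ => (0 : ℝ) := funext h
  rw [this]
  simp [pd]

lemma pd_add {ι : Type} [Fintype ι] [DecidableEq ι]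
    (t : ι) (A B : (ι → ℝ) → ℝ) (x : ι → ℝ)
    (hA : DifferentiableAt ℝ A x) (hB : DifferentiableAt ℝ B x) :
    pd t (fun y => A y + B y) x = pd t A x + pd t B x := by
  unfold pd
  rw [fderiv_fun_add hA hB]
  simp

lemma pd_mul {ι : Type} [Fintype ι] [DecidableEq ι]
    (t : ι) (A B : (ι → ℝ) → ℝ) (x : ι → ℝ)
    (hA : DifferentiableAt ℝ A x) (hB : DifferentiableAt ℝ B x) :
    pd t (fun y => A y * B y) x = A x * pd t B x + B x * pd t A x := by
  unfold pd
  rw [fderiv_fun_mul hA hB]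
  simp

lemma pd_const_mul {ι : Type} [Fintype ι] [DecidableEq ι]
    (t : ι) (c : ℝ) (B : (ι → ℝ) → ℝ) (x : ι → ℝ)
    (hB : DifferentiableAt ℝ B x) :
    pd t (fun y => c * B y) x = c * pd t B x := by
  unfold pd
  rw [fderiv_const_mul hB]
  simp

lemma pd_sum {ι κ : Type} [Fintype ι] [DecidableEq ι] [Fintype κ]
    (t : ι) (A : κ → (ι → ℝ) → ℝ) (x : ι → ℝ)
    (hA : ∀ k, DifferentiableAt ℝ (A k) x) :
    pd t (fun y => ∑ k, A k y) x = ∑ k, pd t (A k) x := by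
  unfold pd
  rw [fderiv_fun_sum fun k _ => hA k]
  simp

noncomputable def Lx (N : ℕ) : ((Fin N ⊕ Fin N) → ℝ) →L[ℝ] (Fin N → ℝ) :=
  ContinuousLinearMap.pi fun i => ContinuousLinearMap.proj (Sum.inl i)

lemma pd_comp_inl {N : ℕ} (g : (Fin N → ℝ) → ℝ) (hg : Differentiable ℝ g) (i : Fin N)
    (z : (Fin N ⊕ Fin N) → ℝ) :
    pd (Sum.inl i) (fun z => g (Xc z)) z = pd i g (Xc z) := by
  have h1 : (fun z : (Fin N ⊕ Fin N) → ℝ => g (Xc z)) = g ∘ (Lx N) := rfl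
  unfold pd
  rw [h1, fderiv_comp z hg.differentiableAt (Lx N).differentiableAt, (Lx N).fderiv]
  show fderiv ℝ g (Lx N z) ((Lx N) (Pi.single (Sum.inl i) 1)) = _
  have h2 : (Lx N) (Pi.single (Sum.inl i) 1) = Pi.single i 1 := by
    funext j
    simp [Lx, Pi.single_apply]
  rw [h2]
  rfl

lemma pd_comp_inr {N : ℕ} (g : (Fin N → ℝ) → ℝ) (hg : Differentiable ℝ g) (i : Fin N)
    (z : (Fin N ⊕ Fin N) → ℝ) :
    pd (Sum.inr i) (fun z => g (Xc z)) z = 0 := by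
  have h1 : (fun z : (Fin N ⊕ Fin N) → ℝ => g (Xc z)) = g ∘ (Lx N) := rfl
  unfold pd
  rw [h1, fderiv_comp z hg.differentiableAt (Lx N).differentiableAt, (Lx N).fderiv]
  show fderiv ℝ g (Lx N z) ((Lx N) (Pi.single (Sum.inr i) 1)) = _
  have h2 : (Lx N) (Pi.single (Sum.inr i) 1) = 0 := by
    funext j
    simp [Lx, Pi.single_apply]
  rw [h2, map_zero]

lemma pd_proj {N : ℕ} (t : Fin N ⊕ Fin N) (s : Fin N) (z : (Fin N ⊕ Fin N) → ℝ) :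
    pd t (fun z : (Fin N ⊕ Fin N) → ℝ => z (Sum.inr s)) z = (Pi.single t 1 : (Fin N ⊕ Fin N) → ℝ) (Sum.inr s) := by
  unfold pd
  rw [show (fun z : (Fin N ⊕ Fin N) → ℝ => z (Sum.inr s)) =
      ⇑(ContinuousLinearMap.proj (R := ℝ) (φ := fun _ : Fin N ⊕ Fin N => ℝ) (Sum.inr s)) from rfl,
    ContinuousLinearMap.fderiv]
  rfl

lemma diff_casimir {N : ℕ} (π₂ : (Fin N → ℝ) → Matrix (Fin N) (Fin N) ℝ)
    (hπ₂ : ∀ i j, ContDiff ℝ ∞ fun x => π₂ x i j)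
    (c' : (Fin N → ℝ) → ℝ) (hc' : IsCasimir π₂ c')
    (s j : Fin N) (x : Fin N → ℝ) :
    ∑ i, (pd s (pd i c') x * π₂ x i j + pd i c' x * pd s (fun y => π₂ y i j) x) = 0 := by
  have h0 : ∀ x, (∑ i, pd i c' x * π₂ x i j) = 0 := fun x => hc'.2 x j
  have h1 := pd_zero_fun s (fun x => ∑ i, pd i c' x * π₂ x i j) h0 x
  rw [pd_sum s (fun i x => pd i c' x * π₂ x i j) x (fun i =>
    (((contDiff_pd i c' hc'.1).mul (hπ₂ i j)).differentiable le1).differentiableAt)] at h1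
  rw [← h1]
  apply Finset.sum_congr rfl
  intro i _
  rw [pd_mul s (pd i c') (fun x => π₂ x i j) x
    (((contDiff_pd i c' hc'.1).differentiable le1).differentiableAt)
    (((hπ₂ i j).differentiable le1).differentiableAt)]
  ring

lemma master_F1 {N : ℕ} (π₂ : (Fin N → ℝ) → Matrix (Fin N) (Fin N) ℝ)
    (p : Fin N) (c' : (Fin N → ℝ) → ℝ) (hc' : IsCasimir π₂ c')
    (hc'p : ∀ x, pd p c' x = 0)
    (γ : ((Fin N ⊕ Fin N) → ℝ) → ℝ)
    (B21 B22 : ((Fin N ⊕ Fin N) → ℝ) → Matrix (Fin N) (Fin N) ℝ) :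
    IsCasimir (fun z => Matrix.fromBlocks 0
        (π₂ (Xc z) + γ z • Matrix.single p p (1 : ℝ))
        (B21 z) (B22 z))
      (fun z => c' (Xc z)) := by
  have hc'd : Differentiable ℝ c' := hc'.1.differentiable le1
  constructor
  · exact hc'.1.comp (Lx N).contDiff
  · intro z j
    rw [Fintype.sum_sum_type]
    have e1 : ∀ i : Fin N, pd (Sum.inl i) (fun z => c' (Xc z)) z = pd i c' (Xc z) :=
      fun i => pd_comp_inl c' hc'd i z
    have e2 : ∀ i : Fin N, pd (Sum.inr i) (fun z => c' (Xc z)) z = 0 :=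
      fun i => pd_comp_inr c' hc'd i z
    simp only [e1, e2, zero_mul, Finset.sum_const_zero, add_zero]
    cases j with
    | inl j => simp [Matrix.fromBlocks_apply₁₁]
    | inr j =>
      simp only [Matrix.fromBlocks_apply₁₂, Matrix.add_apply, Matrix.smul_apply,
        smul_eq_mul, mul_add, Finset.sum_add_distrib]
      rw [hc'.2 (Xc z) j, zero_add]
      apply Finset.sum_eq_zero
      intro i _
      rcases eq_or_ne i p with rfl | hip
      · rw [hc'p]; ring
      · simp [Matrix.single, Ne.symm hip]

section F2
variable {N : ℕ} (c' f : (Fin N → ℝ) → ℝ) (lam : ℝ)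

lemma hproj' (s : Fin N) : ContDiff ℝ ∞ (fun z : (Fin N ⊕ Fin N) → ℝ => z (Sum.inr s)) :=
  (ContinuousLinearMap.proj (R := ℝ) (φ := fun _ : Fin N ⊕ Fin N => ℝ) (Sum.inr s)).contDiff

lemma contDiff_F2 (hc' : ContDiff ℝ ∞ c') (hf : ContDiff ℝ ∞ f) :
    ContDiff ℝ ∞ (fun z : (Fin N ⊕ Fin N) → ℝ =>
      (∑ s, pd s c' (Xc z) * z (Sum.inr s)) + lam * f (Xc z)) := by
  apply ContDiff.add
  · apply ContDiff.sum
    intro s _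
    exact ((contDiff_pd s c' hc').comp (Lx N).contDiff).mul (hproj' s)
  · exact contDiff_const.mul (hf.comp (Lx N).contDiff)

lemma pd_F2_inl (hc' : ContDiff ℝ ∞ c') (hf : ContDiff ℝ ∞ f)
    (i : Fin N) (z : (Fin N ⊕ Fin N) → ℝ) :
    pd (Sum.inl i) (fun z => (∑ s, pd s c' (Xc z) * z (Sum.inr s)) + lam * f (Xc z)) z
      = (∑ s, pd i (pd s c') (Xc z) * z (Sum.inr s)) + lam * pd i f (Xc z) := by
  have hpd : ∀ s : Fin N, ContDiff ℝ ∞ (pd s c') := fun s => contDiff_pd s c' hc'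
  have hA : ∀ s : Fin N, DifferentiableAt ℝ
      (fun z : (Fin N ⊕ Fin N) → ℝ => pd s c' (Xc z) * z (Sum.inr s)) z :=
    fun s => (((((hpd s).comp (Lx N).contDiff)).mul (hproj' s)).differentiable le1).differentiableAt
  have hdA : DifferentiableAt ℝ
      (fun z : (Fin N ⊕ Fin N) → ℝ => ∑ s, pd s c' (Xc z) * z (Sum.inr s)) z :=
    DifferentiableAt.fun_sum fun s _ => hA s
  have hdB : DifferentiableAt ℝ (fun z : (Fin N ⊕ Fin N) → ℝ => lam * f (Xc z)) z :=
    ((contDiff_const.mul (hf.comp (Lx N).contDiff)).differentiable le1).differentiableAt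
  have e0 : pd (Sum.inl i)
      (fun z => (∑ s, pd s c' (Xc z) * z (Sum.inr s)) + lam * f (Xc z)) z
      = pd (Sum.inl i) (fun z => ∑ s, pd s c' (Xc z) * z (Sum.inr s)) z
        + pd (Sum.inl i) (fun z => lam * f (Xc z)) z :=
    pd_add _ _ _ z hdA hdB
  have e1 : pd (Sum.inl i) (fun z => ∑ s, pd s c' (Xc z) * z (Sum.inr s)) z
      = ∑ s, pd (Sum.inl i) (fun z => pd s c' (Xc z) * z (Sum.inr s)) z :=
    pd_sum _ _ z hA
  have e2 : ∀ s : Fin N, pd (Sum.inl i) (fun z => pd s c' (Xc z) * z (Sum.inr s)) z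
      = pd i (pd s c') (Xc z) * z (Sum.inr s) := by
    intro s
    have h := pd_mul (Sum.inl i) (fun z => pd s c' (Xc z))
      (fun z : (Fin N ⊕ Fin N) → ℝ => z (Sum.inr s)) z
      ((((hpd s).comp (Lx N).contDiff).differentiable le1).differentiableAt)
      (((hproj' s).differentiable le1).differentiableAt)
    refine h.trans ?_
    rw [pd_comp_inl (pd s c') ((hpd s).differentiable le1) i z, pd_proj]
    simp [Pi.single_apply, mul_comm]
  have e3 : pd (Sum.inl i) (fun z => lam * f (Xc z)) z = lam * pd i f (Xc z) := by
    have h := pd_const_mul (Sum.inl i) lam (fun z => f (Xc z)) z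
      (((hf.comp (Lx N).contDiff)).differentiable le1).differentiableAt
    refine h.trans ?_
    rw [pd_comp_inl f (hf.differentiable le1) i z]
  rw [e0, e1, e3]
  exact congrArg (· + lam * pd i f (Xc z)) (Finset.sum_congr rfl fun s _ => e2 s)

lemma pd_F2_inr (hc' : ContDiff ℝ ∞ c') (hf : ContDiff ℝ ∞ f)
    (i : Fin N) (z : (Fin N ⊕ Fin N) → ℝ) :
    pd (Sum.inr i) (fun z => (∑ s, pd s c' (Xc z) * z (Sum.inr s)) + lam * f (Xc z)) z
      = pd i c' (Xc z) := by
  have hpd : ∀ s : Fin N, ContDiff ℝ ∞ (pd s c') := fun s => contDiff_pd s c' hc'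
  have hA : ∀ s : Fin N, DifferentiableAt ℝ
      (fun z : (Fin N ⊕ Fin N) → ℝ => pd s c' (Xc z) * z (Sum.inr s)) z :=
    fun s => (((((hpd s).comp (Lx N).contDiff)).mul (hproj' s)).differentiable le1).differentiableAt
  have hdA : DifferentiableAt ℝ
      (fun z : (Fin N ⊕ Fin N) → ℝ => ∑ s, pd s c' (Xc z) * z (Sum.inr s)) z :=
    DifferentiableAt.fun_sum fun s _ => hA s
  have hdB : DifferentiableAt ℝ (fun z : (Fin N ⊕ Fin N) → ℝ => lam * f (Xc z)) z :=
    ((contDiff_const.mul (hf.comp (Lx N).contDiff)).differentiable le1).differentiableAt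
  have e0 : pd (Sum.inr i)
      (fun z => (∑ s, pd s c' (Xc z) * z (Sum.inr s)) + lam * f (Xc z)) z
      = pd (Sum.inr i) (fun z => ∑ s, pd s c' (Xc z) * z (Sum.inr s)) z
        + pd (Sum.inr i) (fun z => lam * f (Xc z)) z :=
    pd_add _ _ _ z hdA hdB
  have e1 : pd (Sum.inr i) (fun z => ∑ s, pd s c' (Xc z) * z (Sum.inr s)) z
      = ∑ s, pd (Sum.inr i) (fun z => pd s c' (Xc z) * z (Sum.inr s)) z :=
    pd_sum _ _ z hA
  have e2 : ∀ s : Fin N, pd (Sum.inr i) (fun z => pd s c' (Xc z) * z (Sum.inr s)) z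
      = pd s c' (Xc z) * (if s = i then (1:ℝ) else 0) := by
    intro s
    have h := pd_mul (Sum.inr i) (fun z => pd s c' (Xc z))
      (fun z : (Fin N ⊕ Fin N) → ℝ => z (Sum.inr s)) z
      ((((hpd s).comp (Lx N).contDiff).differentiable le1).differentiableAt)
      (((hproj' s).differentiable le1).differentiableAt)
    refine h.trans ?_
    rw [pd_comp_inr (pd s c') ((hpd s).differentiable le1) i z, pd_proj]
    simp [Pi.single_apply]
  have e3 : pd (Sum.inr i) (fun z => lam * f (Xc z)) z = 0 := by
    have h := pd_const_mul (Sum.inr i) lam (fun z => f (Xc z)) z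
      (((hf.comp (Lx N).contDiff)).differentiable le1).differentiableAt
    refine h.trans ?_
    rw [pd_comp_inr f (hf.differentiable le1) i z, mul_zero]
  rw [e0, e1, e3, add_zero, Finset.sum_congr rfl fun s _ => e2 s]
  simp
end F2
lemma master_F2 {N : ℕ} (π₁ π₂ : (Fin N → ℝ) → Matrix (Fin N) (Fin N) ℝ)
    (hπ₁a : ∀ x i j, π₁ x j i = - π₁ x i j)
    (hπ₂s : ∀ i j, ContDiff ℝ ∞ fun x => π₂ x i j)
    (p : Fin N) (lam : ℝ)
    (c' : (Fin N → ℝ) → ℝ) (hc' : IsCasimir π₂ c')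
    (f : (Fin N → ℝ) → ℝ) (hf : ContDiff ℝ ∞ f)
    (hcond : ∀ x j, ∑ m, π₂ x m j * pd m f x = ∑ n, π₁ x j n * pd n c' x)
    (hc'p : ∀ x, pd p c' x = 0) (hfp : ∀ x, pd p f x = 0)
    (γ : ((Fin N ⊕ Fin N) → ℝ) → ℝ) :
    IsCasimir (fun z => Matrix.fromBlocks 0
        (π₂ (Xc z) + γ z • Matrix.single p p (1 : ℝ))
        (π₂ (Xc z) - γ z • Matrix.single p p (1 : ℝ))
        (∑ s, Yc z s • pdMat s π₂ (Xc z) + lam • π₁ (Xc z)))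
      (fun z => (∑ s, pd s c' (Xc z) * z (Sum.inr s)) + lam * f (Xc z)) := by
  constructor
  · exact contDiff_F2 c' f lam hc'.1 hf
  · intro z j
    have einl := fun i => pd_F2_inl c' f lam hc'.1 hf i z
    have einr := fun i => pd_F2_inr c' f lam hc'.1 hf i z
    rw [Fintype.sum_sum_type]
    simp only [einl, einr]
    set x := Xc z with hx
    cases j with
    | inl j =>
      simp only [Matrix.fromBlocks_apply₁₁, Matrix.zero_apply, mul_zero,
        Finset.sum_const_zero, zero_add, Matrix.fromBlocks_apply₂₁, Matrix.sub_apply,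
        Matrix.smul_apply, smul_eq_mul, mul_sub, Finset.sum_sub_distrib]
      rw [hc'.2 x j, zero_sub, neg_eq_zero]
      apply Finset.sum_eq_zero
      intro i _
      rcases eq_or_ne i p with rfl | hip
      · rw [hc'p]; ring
      · simp [Matrix.single, Ne.symm hip]
    | inr j =>
      simp only [Matrix.fromBlocks_apply₁₂, Matrix.fromBlocks_apply₂₂, Matrix.add_apply,
        Matrix.smul_apply, Matrix.sum_apply, smul_eq_mul, pdMat, Matrix.of_apply, Yc]
      -- abbreviations
      have expand1 : ∀ i : Fin N,
          ((∑ s, pd i (pd s c') x * z (Sum.inr s)) + lam * pd i f x)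
            * (π₂ x i j + γ z * Matrix.single p p (1:ℝ) i j)
          = ((∑ s, pd i (pd s c') x * z (Sum.inr s)) * π₂ x i j
              + pd i f x * π₂ x i j * lam)
            + ((∑ s, pd i (pd s c') x * z (Sum.inr s)) + lam * pd i f x)
              * (γ z * Matrix.single p p (1:ℝ) i j) := by
        intro i; ring
      have expand2 : ∀ i : Fin N,
          pd i c' x * ((∑ s, z (Sum.inr s) * pd s (fun y => π₂ y i j) x) + lam * π₁ x i j)
          = pd i c' x * (∑ s, z (Sum.inr s) * pd s (fun y => π₂ y i j) x)
            + pd i c' x * π₁ x i j * lam := by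
        intro i; ring
      rw [Finset.sum_congr rfl fun i _ => expand1 i,
        Finset.sum_congr rfl fun i _ => expand2 i,
        Finset.sum_add_distrib, Finset.sum_add_distrib, Finset.sum_add_distrib]
      have hE : ∑ i, ((∑ s, pd i (pd s c') x * z (Sum.inr s)) + lam * pd i f x)
          * (γ z * Matrix.single p p (1:ℝ) i j) = 0 := by
        apply Finset.sum_eq_zero
        intro i _
        rcases eq_or_ne i p with rfl | hip
        · have h1 : ∀ s : Fin N, pd i (pd s c') x = 0 := fun s => by
            rw [pd_comm i s c' hc'.1 x]
            exact pd_zero_fun s (pd i c') hc'p x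
          simp [h1, hfp]
        · simp [Matrix.single, Ne.symm hip]
      have hy : (∑ i, (∑ s, pd i (pd s c') x * z (Sum.inr s)) * π₂ x i j)
          + ∑ i, pd i c' x * (∑ s, z (Sum.inr s) * pd s (fun y => π₂ y i j) x) = 0 := by
        rw [← Finset.sum_add_distrib]
        have step : ∀ i : Fin N,
            (∑ s, pd i (pd s c') x * z (Sum.inr s)) * π₂ x i j
              + pd i c' x * (∑ s, z (Sum.inr s) * pd s (fun y => π₂ y i j) x)
            = ∑ s, z (Sum.inr s) * (pd i (pd s c') x * π₂ x i j
                + pd i c' x * pd s (fun y => π₂ y i j) x) := by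
          intro i
          rw [Finset.sum_mul, Finset.mul_sum, ← Finset.sum_add_distrib]
          exact Finset.sum_congr rfl fun s _ => by ring
        rw [Finset.sum_congr rfl fun i _ => step i, Finset.sum_comm]
        apply Finset.sum_eq_zero
        intro s _
        rw [← Finset.mul_sum]
        have : ∑ i, (pd i (pd s c') x * π₂ x i j
            + pd i c' x * pd s (fun y => π₂ y i j) x) = 0 := by
          rw [← diff_casimir π₂ hπ₂s c' hc' s j x]
          exact Finset.sum_congr rfl fun i _ => by
            rw [pd_comm i s c' hc'.1 x]
        rw [this, mul_zero]
      have hlam : (∑ i, pd i f x * π₂ x i j) + ∑ i, pd i c' x * π₁ x i j = 0 := by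
        have h1 : ∑ i, pd i f x * π₂ x i j = ∑ m, π₂ x m j * pd m f x :=
          Finset.sum_congr rfl fun i _ => mul_comm _ _
        have h2 : ∑ n, π₁ x j n * pd n c' x = - ∑ i, pd i c' x * π₁ x i j := by
          rw [← Finset.sum_neg_distrib]
          exact Finset.sum_congr rfl fun n _ => by rw [hπ₁a x n j]; ring
        rw [h1, hcond x j, h2]; ring
      rw [← Finset.sum_mul, ← Finset.sum_mul]
      linear_combination hy + lam * hlam + hE

/-- `F₁(x,y) = c'(x)` and `F₂(x,y) = ∑ s (∂c'/∂x_s)(x) y_s + λ f(x)` are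
Casimir functions for `Π_{TM,λ,c(x)}`, and also for `Π_{TM,λ,c(y)}` when `c` is linear. -/
theorem stmt8 {N : ℕ} (hN : 1 ≤ N)
    (π₁ π₂ : (Fin N → ℝ) → Matrix (Fin N) (Fin N) ℝ)
    (hπ₁ : IsPoissonTensor π₁) (hπ₂ : IsPoissonTensor π₂)
    (hcomp : IsPoissonTensor (fun x => π₁ x + π₂ x))
    (p : Fin N)
    (hp₁ : ∀ x i j, pd p (fun y => π₁ y i j) x = 0)
    (hp₂ : ∀ x i j, pd p (fun y => π₂ y i j) x = 0)
    (lam : ℝ)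
    (c : (Fin N → ℝ) → ℝ) (hc : IsCasimir π₂ c)
    (c' : (Fin N → ℝ) → ℝ) (hc' : IsCasimir π₂ c')
    (f : (Fin N → ℝ) → ℝ) (hf : ContDiff ℝ ∞ f)
    (hcond : ∀ x j, ∑ m, π₂ x m j * pd m f x = ∑ n, π₁ x j n * pd n c' x)
    (hc'p : ∀ x, pd p c' x = 0) (hfp : ∀ x, pd p f x = 0) :
    IsCasimir (tensorLamCX π₁ π₂ p c lam) (fun z => c' (Xc z)) ∧
    IsCasimir (tensorLamCX π₁ π₂ p c lam)
      (fun z => (∑ s, pd s c' (Xc z) * z (Sum.inr s)) + lam * f (Xc z)) ∧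
    (IsLinearFun c →
      IsCasimir (tensorLamCY π₁ π₂ p c lam) (fun z => c' (Xc z)) ∧
      IsCasimir (tensorLamCY π₁ π₂ p c lam)
        (fun z => (∑ s, pd s c' (Xc z) * z (Sum.inr s)) + lam * f (Xc z))) := by
  refine ⟨?_, ?_, fun _ => ⟨?_, ?_⟩⟩
  · exact master_F1 π₂ p c' hc' hc'p (fun z => c (Xc z)) _ _
  · exact master_F2 π₁ π₂ hπ₁.2.1 hπ₂.1 p lam c' hc' f hf hcond hc'p hfp (fun z => c (Xc z))
  · exact master_F1 π₂ p c' hc' hc'p (fun z => c (Yc z)) _ _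
  · exact master_F2 π₁ π₂ hπ₁.2.1 hπ₂.1 p lam c' hc' f hf hcond hc'p hfp (fun z => c (Yc z))
end

section
/- Let π be a linear Poisson tensor on ℝ^N that does not depend on the variable x_p for some fixed 1 ≤ p ≤ N, and let c be a Casimir function for π. Then for every λ ∈ ℝ the 2N×2N matrix field on ℝ^{2N} with blocks Π^{xx}(x,y) = λ·π(x), Π^{xy}(x,y) = π(x) + c(x)·E_pp, Π^{yx}(x,y) = π(x) − c(x)·E_pp, Π^{yy}(x,y) = π(y) is a Poisson tensor on ℝ^{2N}. -/
open scoped ContDiff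

/-- A linear (Lie–Poisson) tensor: `π_{ij}(x) = ∑ n, c^n_{ij} x_n`. -/
def IsLinearTensor {N : ℕ} (π : (Fin N → ℝ) → Matrix (Fin N) (Fin N) ℝ) : Prop :=
  ∃ C : Fin N → Fin N → Fin N → ℝ, ∀ x i j, π x i j = ∑ n, C i j n * x n

section Helpers

variable {ι : Type} [Fintype ι] [DecidableEq ι]

lemma pd_linear (K : ι → ℝ) (s : ι) (x : ι → ℝ) :
    pd s (fun y => ∑ n, K n * y n) x = K s := by
  have hL : (fun y : ι → ℝ => ∑ n, K n * y n)
      = ⇑(∑ n, K n • ContinuousLinearMap.proj (R := ℝ) (φ := fun _ : ι => ℝ) n) := by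
    funext y
    simp [ContinuousLinearMap.sum_apply, ContinuousLinearMap.proj_apply]
  rw [pd, hL, ContinuousLinearMap.fderiv]
  simp [ContinuousLinearMap.sum_apply, ContinuousLinearMap.proj_apply, Pi.single_apply]

lemma pd_add_s9 {f g : (ι → ℝ) → ℝ} {x : ι → ℝ} (hf : DifferentiableAt ℝ f x)
    (hg : DifferentiableAt ℝ g x) (s : ι) :
    pd s (fun y => f y + g y) x = pd s f x + pd s g x := by
  simp [pd, fderiv_fun_add hf hg]

lemma pd_sub {f g : (ι → ℝ) → ℝ} {x : ι → ℝ} (hf : DifferentiableAt ℝ f x)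
    (hg : DifferentiableAt ℝ g x) (s : ι) :
    pd s (fun y => f y - g y) x = pd s f x - pd s g x := by
  simp [pd, fderiv_fun_sub hf hg]

lemma pd_const_mul_s9 {f : (ι → ℝ) → ℝ} {x : ι → ℝ} (hf : DifferentiableAt ℝ f x)
    (a : ℝ) (s : ι) :
    pd s (fun y => a * f y) x = a * pd s f x := by
  rw [pd, fderiv_const_mul hf a]; simp [pd]

lemma pd_mul_const {f : (ι → ℝ) → ℝ} {x : ι → ℝ} (hf : DifferentiableAt ℝ f x)
    (a : ℝ) (s : ι) :
    pd s (fun y => f y * a) x = pd s f x * a := by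
  rw [pd, fderiv_mul_const hf a]
  simp only [ContinuousLinearMap.smul_apply, smul_eq_mul, pd]; ring

end Helpers

/-- projection onto the `x` coordinates, as a continuous linear map -/
noncomputable def LX (N : ℕ) : ((Fin N ⊕ Fin N) → ℝ) →L[ℝ] (Fin N → ℝ) :=
  ContinuousLinearMap.pi fun i => ContinuousLinearMap.proj (Sum.inl i)

/-- projection onto the `y` coordinates, as a continuous linear map -/
noncomputable def LY (N : ℕ) : ((Fin N ⊕ Fin N) → ℝ) →L[ℝ] (Fin N → ℝ) :=
  ContinuousLinearMap.pi fun i => ContinuousLinearMap.proj (Sum.inr i)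

lemma LX_apply {N : ℕ} (z : (Fin N ⊕ Fin N) → ℝ) : LX N z = Xc z := rfl
lemma LY_apply {N : ℕ} (z : (Fin N ⊕ Fin N) → ℝ) : LY N z = Yc z := rfl

lemma pd_comp_X {N : ℕ} (f : (Fin N → ℝ) → ℝ) (hf : Differentiable ℝ f)
    (s : Fin N ⊕ Fin N) (z : (Fin N ⊕ Fin N) → ℝ) :
    pd s (fun w => f (Xc w)) z
      = fderiv ℝ f (Xc z) (LX N (Pi.single s 1)) := by
  have h : (fun w : (Fin N ⊕ Fin N) → ℝ => f (Xc w)) = f ∘ (LX N) := rfl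
  rw [pd, h, fderiv_comp z (hf _) (LX N).differentiableAt, (LX N).fderiv]
  rfl

lemma pd_comp_Y {N : ℕ} (f : (Fin N → ℝ) → ℝ) (hf : Differentiable ℝ f)
    (s : Fin N ⊕ Fin N) (z : (Fin N ⊕ Fin N) → ℝ) :
    pd s (fun w => f (Yc w)) z
      = fderiv ℝ f (Yc z) (LY N (Pi.single s 1)) := by
  have h : (fun w : (Fin N ⊕ Fin N) → ℝ => f (Yc w)) = f ∘ (LY N) := rfl
  rw [pd, h, fderiv_comp z (hf _) (LY N).differentiableAt, (LY N).fderiv]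
  rfl

lemma LX_single_inl {N : ℕ} (s : Fin N) :
    LX N (Pi.single (Sum.inl s) (1:ℝ)) = Pi.single s 1 := by
  funext i; simp [LX, Pi.single_apply]

lemma LX_single_inr {N : ℕ} (s : Fin N) :
    LX N (Pi.single (Sum.inr s) (1:ℝ)) = 0 := by
  funext i; simp [LX, Pi.single_apply]

lemma LY_single_inr {N : ℕ} (s : Fin N) :
    LY N (Pi.single (Sum.inr s) (1:ℝ)) = Pi.single s 1 := by
  funext i; simp [LY, Pi.single_apply]

lemma LY_single_inl {N : ℕ} (s : Fin N) :
    LY N (Pi.single (Sum.inl s) (1:ℝ)) = 0 := by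
  funext i; simp [LY, Pi.single_apply]

lemma pd_comp_Xc {N : ℕ} (f : (Fin N → ℝ) → ℝ) (hf : Differentiable ℝ f)
    (s : Fin N) (z : (Fin N ⊕ Fin N) → ℝ) :
    pd (Sum.inl s) (fun w => f (Xc w)) z = pd s f (Xc z) := by
  rw [pd_comp_X f hf _ z, LX_single_inl]; rfl

lemma pd_comp_Xc' {N : ℕ} (f : (Fin N → ℝ) → ℝ) (hf : Differentiable ℝ f)
    (s : Fin N) (z : (Fin N ⊕ Fin N) → ℝ) :
    pd (Sum.inr s) (fun w => f (Xc w)) z = 0 := by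
  rw [pd_comp_X f hf _ z, LX_single_inr]; simp

lemma pd_comp_Yc {N : ℕ} (f : (Fin N → ℝ) → ℝ) (hf : Differentiable ℝ f)
    (s : Fin N) (z : (Fin N ⊕ Fin N) → ℝ) :
    pd (Sum.inr s) (fun w => f (Yc w)) z = pd s f (Yc z) := by
  rw [pd_comp_Y f hf _ z, LY_single_inr]; rfl

lemma pd_comp_Yc' {N : ℕ} (f : (Fin N → ℝ) → ℝ) (hf : Differentiable ℝ f)
    (s : Fin N) (z : (Fin N ⊕ Fin N) → ℝ) :
    pd (Sum.inl s) (fun w => f (Yc w)) z = 0 := by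
  rw [pd_comp_Y f hf _ z, LY_single_inl]; simp

/-- cyclic invariance of the Jacobi expression -/
lemma jac_cyc {ι : Type} [Fintype ι] [DecidableEq ι]
    (F : (ι → ℝ) → Matrix ι ι ℝ) (z : ι → ℝ) (i j k : ι) :
    (∑ s, (pd s (fun y => F y i j) z * F z s k + pd s (fun y => F y k i) z * F z s j
        + pd s (fun y => F y j k) z * F z s i))
      = ∑ s, (pd s (fun y => F y j k) z * F z s i + pd s (fun y => F y i j) z * F z s k
        + pd s (fun y => F y k i) z * F z s j) :=
  Finset.sum_congr rfl fun s _ => by ring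

/-- for a linear Poisson tensor `π` independent of `x_p` and a Casimir `c`,
the tensor with blocks `[[λπ(x), π(x)+c(x)E_pp],[π(x)−c(x)E_pp, π(y)]]` is Poisson. -/
theorem stmt9 {N : ℕ} (hN : 1 ≤ N)
    (π : (Fin N → ℝ) → Matrix (Fin N) (Fin N) ℝ)
    (hπ : IsPoissonTensor π) (hlin : IsLinearTensor π)
    (p : Fin N) (hp : ∀ x i j, pd p (fun y => π y i j) x = 0)
    (c : (Fin N → ℝ) → ℝ) (hc : IsCasimir π c)
    (lam : ℝ) :
    IsPoissonTensor (fun z : (Fin N ⊕ Fin N) → ℝ =>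
      Matrix.fromBlocks
        (lam • π (Xc z))
        (π (Xc z) + c (Xc z) • Matrix.single p p (1 : ℝ))
        (π (Xc z) - c (Xc z) • Matrix.single p p (1 : ℝ))
        (π (Yc z))) := by
  obtain ⟨C, hC⟩ := hlin
  have hπdiff : ∀ i j, Differentiable ℝ fun x => π x i j :=
    fun i j => (hπ.1 i j).differentiable (by simp)
  have hcdiff : Differentiable ℝ c := hc.1.differentiable (by simp)
  have hD : ∀ (x : Fin N → ℝ) (i j s : Fin N), pd s (fun y => π y i j) x = C i j s := by
    intro x i j s
    rw [show (fun y => π y i j) = (fun y : Fin N → ℝ => ∑ n, C i j n * y n) from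
      funext fun y => hC y i j]
    exact pd_linear _ _ _
  have hCp : ∀ i j, C i j p = 0 := fun i j => (hD 0 i j p).symm.trans (hp 0 i j)
  have hEsymm : ∀ a b : Fin N,
      Matrix.single p p (1:ℝ) a b = Matrix.single p p (1:ℝ) b a := by
    intro a b; simp [Matrix.single, and_comm]
  have hEe : ∀ a b : Fin N, Matrix.single p p (1:ℝ) a b
      = (if p = a then (1:ℝ) else 0) * (if p = b then (1:ℝ) else 0) := by
    intro a b
    by_cases h1 : p = a <;> by_cases h2 : p = b <;> simp [Matrix.single, h1, h2]
  refine ⟨?_, ?_, ?_⟩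
  · rintro (i | i) (j | j) <;>
      simp only [Matrix.fromBlocks_apply₁₁, Matrix.fromBlocks_apply₁₂,
        Matrix.fromBlocks_apply₂₁, Matrix.fromBlocks_apply₂₂, Matrix.add_apply,
        Matrix.sub_apply, Matrix.smul_apply, smul_eq_mul]
    · exact contDiff_const.mul ((hπ.1 i j).comp (LX N).contDiff)
    · exact ((hπ.1 i j).comp (LX N).contDiff).add
        ((hc.1.comp (LX N).contDiff).mul contDiff_const)
    · exact ((hπ.1 i j).comp (LX N).contDiff).sub
        ((hc.1.comp (LX N).contDiff).mul contDiff_const)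
    · exact (hπ.1 i j).comp (LY N).contDiff
  · rintro z (i | i) (j | j) <;>
      simp only [Matrix.fromBlocks_apply₁₁, Matrix.fromBlocks_apply₁₂,
        Matrix.fromBlocks_apply₂₁, Matrix.fromBlocks_apply₂₂, Matrix.add_apply,
        Matrix.sub_apply, Matrix.smul_apply, smul_eq_mul]
    case inl.inl => rw [hπ.2.1 (Xc z) i j]; ring
    case inl.inr => rw [hπ.2.1 (Xc z) i j, hEsymm j i]; ring
    case inr.inl => rw [hπ.2.1 (Xc z) i j, hEsymm j i]; ring
    case inr.inr => rw [hπ.2.1 (Yc z) i j]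
  · intro z i j k
    set F : ((Fin N ⊕ Fin N) → ℝ) → Matrix (Fin N ⊕ Fin N) (Fin N ⊕ Fin N) ℝ :=
      (fun z : (Fin N ⊕ Fin N) → ℝ =>
        Matrix.fromBlocks
          (lam • π (Xc z))
          (π (Xc z) + c (Xc z) • Matrix.single p p (1 : ℝ))
          (π (Xc z) - c (Xc z) • Matrix.single p p (1 : ℝ))
          (π (Yc z))) with hF
    have hcasx : ∀ b, (∑ s, pd s c (Xc z) * π (Xc z) s b) = 0 := fun b => hc.2 (Xc z) b
    have hJx : ∀ a b d, (∑ s, (C a b s * π (Xc z) s d + C d a s * π (Xc z) s b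
        + C b d s * π (Xc z) s a)) = 0 := by
      intro a b d
      have h := hπ.2.2 (Xc z) a b d
      simp only [hD] at h
      exact h
    have hJy : ∀ a b d, (∑ s, (C a b s * π (Yc z) s d + C d a s * π (Yc z) s b
        + C b d s * π (Yc z) s a)) = 0 := by
      intro a b d
      have h := hπ.2.2 (Yc z) a b d
      simp only [hD] at h
      exact h
    have hCsum : ∀ a b, (∑ s, C a b s * (if p = s then (1:ℝ) else 0)) = 0 := by
      intro a b
      simp [mul_ite, Finset.sum_ite_eq, hCp a b]
    have hpd11 : ∀ (a b : Fin N) (s : Fin N),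
        pd (Sum.inl s) (fun w => lam * π (Xc w) a b) z = lam * C a b s := by
      intro a b s
      have h1 := pd_comp_Xc (fun x => lam * π x a b) ((hπdiff a b).const_mul lam) s z
      have h2 := pd_const_mul_s9 (f := fun x => π x a b) ((hπdiff a b) (Xc z)) lam s
      rw [hD] at h2
      exact h1.trans h2
    have hpd11' : ∀ (a b : Fin N) (s : Fin N),
        pd (Sum.inr s) (fun w => lam * π (Xc w) a b) z = 0 :=
      fun a b s => pd_comp_Xc' (fun x => lam * π x a b) ((hπdiff a b).const_mul lam) s z
    have hpd12 : ∀ (a b : Fin N) (e : ℝ) (s : Fin N),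
        pd (Sum.inl s) (fun w => π (Xc w) a b + c (Xc w) * e) z
          = C a b s + pd s c (Xc z) * e := by
      intro a b e s
      have h1 := pd_comp_Xc (fun x => π x a b + c x * e)
        ((hπdiff a b).add (hcdiff.mul_const e)) s z
      have h2 := pd_add_s9 (f := fun x => π x a b) (g := fun x => c x * e)
        ((hπdiff a b) (Xc z)) ((hcdiff (Xc z)).mul_const e) s
      have h3 := pd_mul_const (f := c) (hcdiff (Xc z)) e s
      rw [hD, h3] at h2
      exact h1.trans h2
    have hpd12' : ∀ (a b : Fin N) (e : ℝ) (s : Fin N),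
        pd (Sum.inr s) (fun w => π (Xc w) a b + c (Xc w) * e) z = 0 :=
      fun a b e s => pd_comp_Xc' (fun x => π x a b + c x * e)
        ((hπdiff a b).add (hcdiff.mul_const e)) s z
    have hpd21 : ∀ (a b : Fin N) (e : ℝ) (s : Fin N),
        pd (Sum.inl s) (fun w => π (Xc w) a b - c (Xc w) * e) z
          = C a b s - pd s c (Xc z) * e := by
      intro a b e s
      have h1 := pd_comp_Xc (fun x => π x a b - c x * e)
        ((hπdiff a b).sub (hcdiff.mul_const e)) s z
      have h2 := pd_sub (f := fun x => π x a b) (g := fun x => c x * e)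
        ((hπdiff a b) (Xc z)) ((hcdiff (Xc z)).mul_const e) s
      have h3 := pd_mul_const (f := c) (hcdiff (Xc z)) e s
      rw [hD, h3] at h2
      exact h1.trans h2
    have hpd21' : ∀ (a b : Fin N) (e : ℝ) (s : Fin N),
        pd (Sum.inr s) (fun w => π (Xc w) a b - c (Xc w) * e) z = 0 :=
      fun a b e s => pd_comp_Xc' (fun x => π x a b - c x * e)
        ((hπdiff a b).sub (hcdiff.mul_const e)) s z
    have hpd22 : ∀ (a b : Fin N) (s : Fin N),
        pd (Sum.inr s) (fun w => π (Yc w) a b) z = C a b s :=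
      fun a b s => (pd_comp_Yc (fun x => π x a b) (hπdiff a b) s z).trans (hD (Yc z) a b s)
    have hpd22' : ∀ (a b : Fin N) (s : Fin N),
        pd (Sum.inl s) (fun w => π (Yc w) a b) z = 0 :=
      fun a b s => pd_comp_Yc' (fun x => π x a b) (hπdiff a b) s z
    have key1 : ∀ a b d : Fin N,
        (∑ s, (pd s (fun y => F y (Sum.inl a) (Sum.inl b)) z * F z s (Sum.inl d)
          + pd s (fun y => F y (Sum.inl d) (Sum.inl a)) z * F z s (Sum.inl b)
          + pd s (fun y => F y (Sum.inl b) (Sum.inl d)) z * F z s (Sum.inl a))) = 0 := by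
      intro a b d
      rw [hF, Fintype.sum_sum_type]
      simp only [Matrix.fromBlocks_apply₁₁, Matrix.fromBlocks_apply₁₂,
        Matrix.fromBlocks_apply₂₁, Matrix.fromBlocks_apply₂₂, Matrix.add_apply,
        Matrix.sub_apply, Matrix.smul_apply, smul_eq_mul,
        hpd11, hpd11', hpd12, hpd12', hpd21, hpd21', hpd22, hpd22', hEe]
      have hcombo : lam * lam * (∑ s, (C a b s * π (Xc z) s d + C d a s * π (Xc z) s b
          + C b d s * π (Xc z) s a)) = 0 := by rw [hJx a b d]; ring
      refine Eq.trans ?_ hcombo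
      simp only [Finset.mul_sum, ← Finset.sum_add_distrib]
      exact Finset.sum_congr rfl fun s _ => by ring
    have key2 : ∀ a b d : Fin N,
        (∑ s, (pd s (fun y => F y (Sum.inl a) (Sum.inl b)) z * F z s (Sum.inr d)
          + pd s (fun y => F y (Sum.inr d) (Sum.inl a)) z * F z s (Sum.inl b)
          + pd s (fun y => F y (Sum.inl b) (Sum.inr d)) z * F z s (Sum.inl a))) = 0 := by
      intro a b d
      rw [hF, Fintype.sum_sum_type]
      simp only [Matrix.fromBlocks_apply₁₁, Matrix.fromBlocks_apply₁₂,
        Matrix.fromBlocks_apply₂₁, Matrix.fromBlocks_apply₂₂, Matrix.add_apply,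
        Matrix.sub_apply, Matrix.smul_apply, smul_eq_mul,
        hpd11, hpd11', hpd12, hpd12', hpd21, hpd21', hpd22, hpd22', hEe]
      have hcombo : lam * (∑ s, (C a b s * π (Xc z) s d + C d a s * π (Xc z) s b
            + C b d s * π (Xc z) s a))
          + (lam * c (Xc z) * (if p = d then (1:ℝ) else 0))
            * (∑ s, C a b s * (if p = s then (1:ℝ) else 0))
          + (-(lam * (if p = d then (1:ℝ) else 0) * (if p = a then (1:ℝ) else 0)))
            * (∑ s, pd s c (Xc z) * π (Xc z) s b)
          + (lam * (if p = b then (1:ℝ) else 0) * (if p = d then (1:ℝ) else 0))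
            * (∑ s, pd s c (Xc z) * π (Xc z) s a) = 0 := by
        rw [hJx a b d, hCsum a b, hcasx b, hcasx a]; ring
      refine Eq.trans ?_ hcombo
      simp only [Finset.mul_sum, ← Finset.sum_add_distrib]
      exact Finset.sum_congr rfl fun s _ => by ring
    have key3 : ∀ a b d : Fin N,
        (∑ s, (pd s (fun y => F y (Sum.inl a) (Sum.inr b)) z * F z s (Sum.inr d)
          + pd s (fun y => F y (Sum.inr d) (Sum.inl a)) z * F z s (Sum.inr b)
          + pd s (fun y => F y (Sum.inr b) (Sum.inr d)) z * F z s (Sum.inl a))) = 0 := by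
      intro a b d
      rw [hF, Fintype.sum_sum_type]
      simp only [Matrix.fromBlocks_apply₁₁, Matrix.fromBlocks_apply₁₂,
        Matrix.fromBlocks_apply₂₁, Matrix.fromBlocks_apply₂₂, Matrix.add_apply,
        Matrix.sub_apply, Matrix.smul_apply, smul_eq_mul,
        hpd11, hpd11', hpd12, hpd12', hpd21, hpd21', hpd22, hpd22', hEe]
      have hcombo : (∑ s, (C a b s * π (Xc z) s d + C d a s * π (Xc z) s b
            + C b d s * π (Xc z) s a))
          + (c (Xc z) * (if p = d then (1:ℝ) else 0))
            * (∑ s, C a b s * (if p = s then (1:ℝ) else 0))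
          + (c (Xc z) * (if p = b then (1:ℝ) else 0))
            * (∑ s, C d a s * (if p = s then (1:ℝ) else 0))
          + (-(c (Xc z) * (if p = a then (1:ℝ) else 0)))
            * (∑ s, C b d s * (if p = s then (1:ℝ) else 0))
          + ((if p = a then (1:ℝ) else 0) * (if p = b then (1:ℝ) else 0))
            * (∑ s, pd s c (Xc z) * π (Xc z) s d)
          + (-((if p = d then (1:ℝ) else 0) * (if p = a then (1:ℝ) else 0)))
            * (∑ s, pd s c (Xc z) * π (Xc z) s b) = 0 := by
        rw [hJx a b d, hCsum a b, hCsum d a, hCsum b d, hcasx d, hcasx b]; ring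
      refine Eq.trans ?_ hcombo
      simp only [Finset.mul_sum, ← Finset.sum_add_distrib]
      exact Finset.sum_congr rfl fun s _ => by ring
    have key4 : ∀ a b d : Fin N,
        (∑ s, (pd s (fun y => F y (Sum.inr a) (Sum.inr b)) z * F z s (Sum.inr d)
          + pd s (fun y => F y (Sum.inr d) (Sum.inr a)) z * F z s (Sum.inr b)
          + pd s (fun y => F y (Sum.inr b) (Sum.inr d)) z * F z s (Sum.inr a))) = 0 := by
      intro a b d
      rw [hF, Fintype.sum_sum_type]
      simp only [Matrix.fromBlocks_apply₁₁, Matrix.fromBlocks_apply₁₂,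
        Matrix.fromBlocks_apply₂₁, Matrix.fromBlocks_apply₂₂, Matrix.add_apply,
        Matrix.sub_apply, Matrix.smul_apply, smul_eq_mul,
        hpd11, hpd11', hpd12, hpd12', hpd21, hpd21', hpd22, hpd22', hEe]
      refine Eq.trans ?_ (hJy a b d)
      simp only [Finset.mul_sum, ← Finset.sum_add_distrib]
      exact Finset.sum_congr rfl fun s _ => by ring
    rcases i with a | a <;> rcases j with b | b <;> rcases k with d | d
    · exact key1 a b d
    · exact key2 a b d
    · rw [jac_cyc F z, jac_cyc F z]; exact key2 d a b
    · exact key3 a b d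
    · rw [jac_cyc F z]; exact key2 b d a
    · rw [jac_cyc F z]; exact key3 b d a
    · rw [jac_cyc F z, jac_cyc F z]; exact key3 d a b
    · exact key4 a b d
end
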